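/- For β > 2 and w ∈ [0, 1/2), define h(w,β) = β/(2 + 2cosh(β − 2wβ)). Then the map w ↦ −1 + 2h(w,β) is strictly increasing on [0, 1/2) and vanishes at exactly one point w* given by w* = (β − arcosh(β − 1))/(2β). -/

import Mathlib

/-- Inverse hyperbolic cosine on `[1, ∞)`. -/
noncomputable def arcosh (x : ℝ) : ℝ := Real.log (x + Real.sqrt (x^2 - 1))

lemma cosh_arcosh {x : ℝ} (hx : 1 ≤ x) : Real.cosh (arcosh x) = x := by
  have h1 : (0:ℝ) ≤ x^2 - 1 := by nlinarith
  have hs : Real.sqrt (x^2 - 1) ^ 2 = x^2 - 1 := Real.sq_sqrt h1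
  have hsn : 0 ≤ Real.sqrt (x^2 - 1) := Real.sqrt_nonneg _
  have hy : 0 < x + Real.sqrt (x^2 - 1) := by linarith
  have hinv : (x + Real.sqrt (x^2 - 1))⁻¹ = x - Real.sqrt (x^2 - 1) :=
    inv_eq_of_mul_eq_one_right (by nlinarith)
  rw [arcosh, Real.cosh_eq, Real.exp_log hy, Real.exp_neg, Real.exp_log hy, hinv]
  ring

lemma arcosh_pos {x : ℝ} (hx : 1 < x) : 0 < arcosh x := by
  have h1 : (0:ℝ) ≤ x^2 - 1 := by nlinarith
  apply Real.log_pos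
  have := Real.sqrt_nonneg (x^2 - 1)
  linarith

theorem neg_one_add_two_h_strictMono_and_root (β : ℝ) (hβ : 2 < β) :
    StrictMonoOn (fun w : ℝ => -1 + 2 * (β / (2 + 2 * Real.cosh (β - 2 * w * β))))
        (Set.Ico (0:ℝ) (1/2)) ∧
      (β - arcosh (β - 1)) / (2 * β) ∈ Set.Ico (0:ℝ) (1/2) ∧
      ∀ w ∈ Set.Ico (0:ℝ) (1/2),
        (-1 + 2 * (β / (2 + 2 * Real.cosh (β - 2 * w * β))) = 0 ↔
          w = (β - arcosh (β - 1)) / (2 * β)) := by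
  have hβ0 : 0 < β := by linarith
  have hb1 : (1:ℝ) < β - 1 := by linarith
  have hA : arcosh (β - 1) > 0 := arcosh_pos hb1
  have hcA : Real.cosh (arcosh (β - 1)) = β - 1 := cosh_arcosh hb1.le
  -- arcosh (β-1) < β
  have hA2 : arcosh (β - 1) < β := by
    have h1 : (0:ℝ) ≤ (β-1)^2 - 1 := by nlinarith
    have hs : Real.sqrt ((β-1)^2 - 1) < β - 1 :=
      (Real.sqrt_lt' (by linarith)).2 (by nlinarith)
    have hy : (β - 1) + Real.sqrt ((β-1)^2 - 1) < 2 * (β - 1) := by linarith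
    have := Real.log_lt_log (by positivity) hy
    have hl2 : Real.log 2 < 1 := by
      have := Real.log_two_lt_d9; linarith
    have hlb : Real.log (β-1) ≤ β - 2 := by
      have := Real.log_le_sub_one_of_pos (x := β-1) (by linarith); linarith
    calc arcosh (β-1) < Real.log (2*(β-1)) := this
      _ = Real.log 2 + Real.log (β-1) := Real.log_mul two_ne_zero (by linarith)
      _ < β := by linarith
  -- membership of the root
  have hwstar : (β - arcosh (β - 1)) / (2 * β) ∈ Set.Ico (0:ℝ) (1/2) := by
    constructor
    · apply div_nonneg (by linarith) (by linarith)
    · rw [div_lt_iff₀ (by linarith)]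
      linarith
  -- strict monotonicity
  have hmono : StrictMonoOn
      (fun w : ℝ => -1 + 2 * (β / (2 + 2 * Real.cosh (β - 2 * w * β))))
      (Set.Ico (0:ℝ) (1/2)) := by
    intro a ha b hb hab
    have ha0 : 0 ≤ β - 2 * b * β := by nlinarith [hb.2]
    have harg : β - 2 * b * β < β - 2 * a * β := by nlinarith
    have hc : Real.cosh (β - 2 * b * β) < Real.cosh (β - 2 * a * β) := by
      rw [Real.cosh_lt_cosh, abs_of_nonneg ha0, abs_of_nonneg (by linarith)]
      exact harg
    have hd : (0:ℝ) < 2 + 2 * Real.cosh (β - 2 * b * β) := by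
      have := Real.cosh_pos (β - 2 * b * β); linarith
    have : β / (2 + 2 * Real.cosh (β - 2 * a * β)) <
        β / (2 + 2 * Real.cosh (β - 2 * b * β)) :=
      div_lt_div_of_pos_left hβ0 hd (by linarith)
    simp only
    linarith
  refine ⟨hmono, hwstar, fun w hw => ?_⟩
  have ht0 : 0 < β - 2 * w * β := by nlinarith [hw.2]
  have hd : (0:ℝ) < 2 + 2 * Real.cosh (β - 2 * w * β) := by
    have := Real.cosh_pos (β - 2 * w * β); linarith
  constructor
  · intro h0
    have hcosh : Real.cosh (β - 2 * w * β) = β - 1 := by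
      field_simp at h0
      rw [show β * (1 - 2 * w) = β - 2 * w * β by ring] at h0
      linarith
    have : β - 2 * w * β = arcosh (β - 1) := by
      have heq : Real.cosh (β - 2 * w * β) = Real.cosh (arcosh (β - 1)) := by
        rw [hcosh, hcA]
      by_contra hne
      rcases lt_or_gt_of_ne hne with h | h
      · have hlt : Real.cosh (β - 2 * w * β) < Real.cosh (arcosh (β - 1)) := by
          rw [Real.cosh_lt_cosh, abs_of_nonneg ht0.le, abs_of_nonneg hA.le]
          exact h
        linarith
      · have hlt : Real.cosh (arcosh (β - 1)) < Real.cosh (β - 2 * w * β) := by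
          rw [Real.cosh_lt_cosh, abs_of_nonneg hA.le, abs_of_nonneg ht0.le]
          exact h
        linarith
    field_simp
    linarith
  · intro hw'
    subst hw'
    have harg : β - 2 * ((β - arcosh (β - 1)) / (2 * β)) * β = arcosh (β - 1) := by
      field_simp
      ring
    rw [harg, hcA]
    field_simp
    linarith
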